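/- Let n ≥ 3, c > 0, and 0 < ε < ε* := ((n−2)/n)·(2/(nc))^{2/(n−2)}. Then the equation c w^n − |w|² + ε = 0 has exactly 3n complex solutions, namely ρ₁ e^{i(2k+1)π/n}, ρ₂ e^{i2kπ/n}, ρ₃ e^{i2kπ/n} for k = 1, …, n, where 0 < ρ₁ < √ε < ρ₂ < (2/(nc))^{1/(n−2)} < ρ₃. -/

import Mathlib

open Complex

set_option maxHeartbeats 1000000

/-- For `n ≥ 3`, `c > 0` and `0 < ε < ε* = ((n-2)/n)·(2/(nc))^(2/(n-2))`, the equation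
`c wⁿ − |w|² + ε = 0` has exactly `3n` solutions: `ρ₁ e^{i(2k+1)π/n}`, `ρ₂ e^{i2kπ/n}`,
`ρ₃ e^{i2kπ/n}` for `k = 1, …, n`, where
`0 < ρ₁ < √ε < ρ₂ < (2/(nc))^(1/(n-2)) < ρ₃`. -/
theorem zeros_of_truncated_equation (n : ℕ) (hn : 3 ≤ n) (c ε : ℝ) (hc : 0 < c)
    (hε : 0 < ε)
    (hεs : ε < ((n : ℝ) - 2) / n * (2 / (n * c)) ^ ((2 : ℝ) / ((n : ℝ) - 2))) :
    ∃ ρ₁ ρ₂ ρ₃ : ℝ,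
      0 < ρ₁ ∧ ρ₁ < Real.sqrt ε ∧ Real.sqrt ε < ρ₂ ∧
      ρ₂ < (2 / (n * c)) ^ ((1 : ℝ) / ((n : ℝ) - 2)) ∧
      (2 / (n * c)) ^ ((1 : ℝ) / ((n : ℝ) - 2)) < ρ₃ ∧
      (∀ w : ℂ, ((c : ℂ) * w ^ n - (‖w‖ : ℂ) ^ 2 + (ε : ℂ) = 0) ↔
        ∃ k : Finset.Icc 1 n,
          w = (ρ₁ : ℂ) * Complex.exp (((2 * (k : ℕ) + 1) * Real.pi / n : ℝ) * Complex.I) ∨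
          w = (ρ₂ : ℂ) * Complex.exp (((2 * (k : ℕ)) * Real.pi / n : ℝ) * Complex.I) ∨
          w = (ρ₃ : ℂ) * Complex.exp (((2 * (k : ℕ)) * Real.pi / n : ℝ) * Complex.I)) ∧
      Set.ncard {w : ℂ | (c : ℂ) * w ^ n - (‖w‖ : ℂ) ^ 2 + (ε : ℂ) = 0} = 3 * n := by
  have hn0 : 0 < n := by omega
  have hnR : (0:ℝ) < n := by exact_mod_cast hn0
  have hn3R : (3:ℝ) ≤ n := by exact_mod_cast hn
  have hn2 : (0:ℝ) < (n:ℝ) - 2 := by linarith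
  set b : ℝ := 2 / (n * c) with hb
  have hbpos : 0 < b := by positivity
  set R : ℝ := b ^ ((1:ℝ)/((n:ℝ)-2)) with hR
  have hRpos : 0 < R := Real.rpow_pos_of_pos hbpos _
  have hcast : ((n - 2 : ℕ) : ℝ) = (n:ℝ) - 2 := by
    have : 2 ≤ n := by omega
    push_cast [this]; ring
  have hRkey : R ^ (n-2) = b := by
    rw [hR, ← Real.rpow_natCast (b ^ ((1:ℝ)/((n:ℝ)-2))) (n-2), ← Real.rpow_mul hbpos.le, hcast,
      one_div, inv_mul_cancel₀ (ne_of_gt hn2), Real.rpow_one]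
  have hR2 : R ^ 2 = b ^ ((2:ℝ)/((n:ℝ)-2)) := by
    rw [hR, ← Real.rpow_natCast (b ^ ((1:ℝ)/((n:ℝ)-2))) 2, ← Real.rpow_mul hbpos.le]
    norm_num [div_eq_mul_inv, mul_comm]
  have hεs' : ε < ((n:ℝ)-2)/n * R^2 := by rw [hR2]; exact hεs
  clear_value b R
  have hsplit : ∀ ρ:ℝ, ρ ^ n = ρ^2 * ρ^(n-2) := fun ρ => by
    rw [← pow_add]; congr 1; omega
  have hRn : c * R ^ n = 2/n * R^2 := by
    rw [hsplit, hRkey, hb]; field_simp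
  set f : ℝ → ℝ := fun ρ => c * ρ^n - ρ^2 + ε with hf
  set g : ℝ → ℝ := fun ρ => c * ρ^n + ρ^2 - ε with hg
  have hgmono : StrictMonoOn g (Set.Ici 0) := by
    intro a ha b hb hab
    simp only [hg, Set.mem_Ici] at *
    have h1 : a ^ n < b ^ n := pow_lt_pow_left₀ hab ha (by omega)
    have h2 : a ^ 2 < b ^ 2 := pow_lt_pow_left₀ hab ha (by omega)
    nlinarith
  have hfderiv : ∀ x : ℝ, HasDerivAt f (c * (n * x^(n-1)) - 2*x) x := by
    intro x
    have h1 := (hasDerivAt_pow n x).const_mul c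
    have h2 := hasDerivAt_pow 2 x
    have := (h1.sub h2).add_const ε
    simpa [hf, pow_one] using this
  have hfcont : Continuous f := by rw [hf]; continuity
  have hgcont : Continuous g := by rw [hg]; continuity
  have hfanti : StrictAntiOn f (Set.Icc 0 R) := by
    apply strictAntiOn_of_deriv_neg (convex_Icc 0 R) hfcont.continuousOn
    intro x hx
    rw [interior_Icc] at hx
    rw [(hfderiv x).deriv]
    have hx0 : 0 < x := hx.1
    have hlt : x ^ (n-2) < R ^ (n-2) := pow_lt_pow_left₀ hx.2 hx0.le (by omega)
    rw [hRkey, hb] at hlt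
    have h2 : n * c * x^(n-2) < 2 := by
      rw [lt_div_iff₀ (by positivity)] at hlt; linarith
    have hxn : x^(n-1) = x^(n-2) * x := by rw [← pow_succ]; congr 1; omega
    rw [hxn]
    have h3 : n * c * x^(n-2) * x < 2 * x := mul_lt_mul_of_pos_right h2 hx0
    linarith [h3]
  have hfmono : StrictMonoOn f (Set.Ici R) := by
    apply strictMonoOn_of_deriv_pos (convex_Ici R) hfcont.continuousOn
    intro x hx
    rw [interior_Ici] at hx
    rw [(hfderiv x).deriv]
    have hx0 : 0 < x := hRpos.trans hx
    have hlt : R ^ (n-2) < x ^ (n-2) := pow_lt_pow_left₀ hx hRpos.le (by omega)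
    rw [hRkey, hb] at hlt
    have h2 : 2 < n * c * x^(n-2) := by
      rw [div_lt_iff₀ (by positivity)] at hlt; linarith
    have hxn : x^(n-1) = x^(n-2) * x := by rw [← pow_succ]; congr 1; omega
    rw [hxn]
    have h3 : 2 * x < n * c * x^(n-2) * x := mul_lt_mul_of_pos_right h2 hx0
    linarith [h3]
  have hsε0 : 0 < Real.sqrt ε := Real.sqrt_pos.mpr hε
  have hsεR : Real.sqrt ε < R := by
    have h1 : ε < R^2 := by 
      have hfrac : ((n:ℝ)-2)/n < 1 := by rw [div_lt_one hnR]; linarith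
      nlinarith [sq_nonneg R, hεs']
    calc Real.sqrt ε < Real.sqrt (R^2) := Real.sqrt_lt_sqrt hε.le h1
      _ = R := Real.sqrt_sq hRpos.le
  -- roots
  have hg0 : g 0 < 0 := by simp [hg, zero_pow hn0.ne']; linarith
  have hgs : 0 < g (Real.sqrt ε) := by
    have : g (Real.sqrt ε) = c * (Real.sqrt ε)^n := by
      simp only [hg, Real.sq_sqrt hε.le]; ring
    rw [this]; positivity
  obtain ⟨ρ₁, hρ₁mem, hρ₁⟩ := intermediate_value_Ioo hsε0.le hgcont.continuousOn ⟨hg0, hgs⟩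
  have hfsε : 0 < f (Real.sqrt ε) := by
    have : f (Real.sqrt ε) = c * (Real.sqrt ε)^n := by
      simp only [hf, Real.sq_sqrt hε.le]; ring
    rw [this]; positivity
  have hfR : f R < 0 := by
    simp only [hf]
    rw [hRn]
    have : (2:ℝ)/n * R^2 - R^2 = -(((n:ℝ)-2)/n * R^2) := by field_simp; ring
    linarith [hεs']
  obtain ⟨ρ₂, hρ₂mem, hρ₂⟩ := intermediate_value_Ioo' hsεR.le hfcont.continuousOn ⟨hfR, hfsε⟩
  have hM : ∃ M, R < M ∧ 0 < f M := by
    have htop : Filter.Tendsto f Filter.atTop Filter.atTop := by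
      have h1 : Filter.Tendsto (fun ρ:ℝ => c * ρ^(n-2) - 1) Filter.atTop Filter.atTop :=
        Filter.tendsto_atTop_add_const_right _ (-1)
          ((Filter.tendsto_pow_atTop (by omega : n-2 ≠ 0)).const_mul_atTop hc)
      have h2 : Filter.Tendsto (fun ρ:ℝ => ρ^2 * (c * ρ^(n-2) - 1) + ε) Filter.atTop Filter.atTop :=
        Filter.tendsto_atTop_add_const_right _ ε
          ((Filter.tendsto_pow_atTop (two_ne_zero)).atTop_mul_atTop₀ h1)
      have heq : f = fun ρ:ℝ => ρ^2 * (c * ρ^(n-2) - 1) + ε := by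
        funext ρ; simp only [hf]; rw [hsplit]; ring
      rw [heq]; exact h2
    obtain ⟨M, h1, h2⟩ := ((htop.eventually_gt_atTop 0).and (Filter.eventually_gt_atTop R)).exists
    exact ⟨M, h2, h1⟩
  obtain ⟨M, hRM, hfM⟩ := hM
  obtain ⟨ρ₃, hρ₃mem, hρ₃⟩ := intermediate_value_Ioo hRM.le hfcont.continuousOn ⟨hfR, hfM⟩
  -- uniqueness of roots
  have huniq₁ : ∀ ρ, 0 ≤ ρ → g ρ = 0 → ρ = ρ₁ := fun ρ hρ h =>
    hgmono.injOn hρ (Set.mem_Ici.mpr (le_of_lt hρ₁mem.1)) (h.trans hρ₁.symm)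
  have hρ₂Icc : ρ₂ ∈ Set.Icc (0:ℝ) R := ⟨(hsε0.trans hρ₂mem.1).le, hρ₂mem.2.le⟩
  have huniq₂ : ∀ ρ ∈ Set.Icc (0:ℝ) R, f ρ = 0 → ρ = ρ₂ := fun ρ hρ h =>
    hfanti.injOn hρ hρ₂Icc (h.trans hρ₂.symm)
  have huniq₃ : ∀ ρ ∈ Set.Ici R, f ρ = 0 → ρ = ρ₃ := fun ρ hρ h =>
    hfmono.injOn hρ (Set.mem_Ici.mpr hρ₃mem.1.le) (h.trans hρ₃.symm)
  have hρ₁pos : 0 < ρ₁ := hρ₁mem.1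
  have hρ₂pos : 0 < ρ₂ := hsε0.trans hρ₂mem.1
  have hρ₃pos : 0 < ρ₃ := hRpos.trans hρ₃mem.1
  have hnC : (n:ℂ) ≠ 0 := Nat.cast_ne_zero.mpr hn0.ne'
  have hcC : (c:ℂ) ≠ 0 := Complex.ofReal_ne_zero.mpr hc.ne'
  -- roots of unity machinery
  set ζ : ℂ := Complex.exp (2 * Real.pi * I / n) with hζ
  have hζk : ∀ k : ℕ, ζ ^ k = Complex.exp (((2 * (k:ℕ)) * Real.pi / n : ℝ) * I) := by
    intro k
    rw [hζ, ← Complex.exp_nat_mul]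
    congr 1
    push_cast
    field_simp
  have hζn : ζ ^ n = 1 := by
    rw [hζk n]
    have : ((2 * (n:ℕ)) * Real.pi / n : ℝ) = 2 * Real.pi := by field_simp
    rw [this]
    push_cast
    exact Complex.exp_two_pi_mul_I
  have hζmod : ∀ k : ℕ, ζ ^ k = ζ ^ (k % n) := by
    intro k
    conv_lhs => rw [← Nat.div_add_mod k n]
    rw [pow_add, pow_mul, hζn, one_pow, one_mul]
  haveI : NeZero n := ⟨hn0.ne'⟩
  have hprim : IsPrimitiveRoot ζ n := Complex.isPrimitiveRoot_exp n hn0.ne'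
  have hodd : ∀ k : ℕ, Complex.exp (((2 * (k:ℕ) + 1) * Real.pi / n : ℝ) * I)
      = Complex.exp ((Real.pi / n : ℝ) * I) * ζ ^ k := by
    intro k
    rw [hζk, ← Complex.exp_add]
    congr 1
    push_cast
    ring
  have hexpn : Complex.exp ((Real.pi / n : ℝ) * I) ^ n = -1 := by
    rw [← Complex.exp_nat_mul]
    have : (n:ℂ) * ((Real.pi / n : ℝ) * I) = Real.pi * I := by
      push_cast; field_simp
    rw [this, Complex.exp_pi_mul_I]
  have habsζk : ∀ k : ℕ, ‖ζ ^ k‖ = 1 := by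
    intro k; rw [hζk]; exact Complex.norm_exp_ofReal_mul_I _
  -- injectivity of k ↦ ζ^k on [1, n]
  have hζinj : ∀ k k' : ℕ, 1 ≤ k → k ≤ n → 1 ≤ k' → k' ≤ n → ζ ^ k = ζ ^ k' → k = k' := by
    intro k k' h1 h2 h3 h4 h
    rw [hζmod k, hζmod k'] at h
    have := hprim.pow_inj (Nat.mod_lt k hn0) (Nat.mod_lt k' hn0) h
    rcases eq_or_lt_of_le h2 with rfl | hk <;> rcases eq_or_lt_of_le h4 with h' | hk'
    · omega
    · rw [Nat.mod_self, Nat.mod_eq_of_lt hk'] at this; omega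
    · rw [h', Nat.mod_self, Nat.mod_eq_of_lt hk] at this; omega
    · rwa [Nat.mod_eq_of_lt hk, Nat.mod_eq_of_lt hk'] at this
  -- the key iff
  have hiff : ∀ w : ℂ, ((c : ℂ) * w ^ n - (‖w‖ : ℂ) ^ 2 + (ε : ℂ) = 0) ↔
      ∃ k : Finset.Icc 1 n,
        w = (ρ₁ : ℂ) * Complex.exp (((2 * (k : ℕ) + 1) * Real.pi / n : ℝ) * Complex.I) ∨
        w = (ρ₂ : ℂ) * Complex.exp (((2 * (k : ℕ)) * Real.pi / n : ℝ) * Complex.I) ∨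
        w = (ρ₃ : ℂ) * Complex.exp (((2 * (k : ℕ)) * Real.pi / n : ℝ) * Complex.I) := by
    intro w
    constructor
    · intro hw
      have hw0 : w ≠ 0 := by
        rintro rfl
        rw [zero_pow hn0.ne', norm_zero] at hw
        push_cast at hw
        norm_num at hw
        exact hε.ne' (by exact_mod_cast hw)
      set ρ : ℝ := ‖w‖ with hρdef
      have hρ0 : 0 < ρ := norm_pos_iff.mpr hw0
      have hρC : (ρ:ℂ) ≠ 0 := Complex.ofReal_ne_zero.mpr hρ0.ne'
      have hwn : (c:ℂ) * w ^ n = ((ρ^2 - ε : ℝ) : ℂ) := by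
        push_cast
        linear_combination hw
      have habs : c * ρ ^ n = |ρ^2 - ε| := by
        have h2 := congrArg norm hwn
        rw [norm_mul, norm_pow, Complex.norm_real, Complex.norm_real, Real.norm_eq_abs, Real.norm_eq_abs, ← hρdef,
          _root_.abs_of_pos hc] at h2
        exact h2
      clear_value ρ
      rcases le_or_gt ε (ρ^2) with hcase | hcase
      · -- w^n = ρ^n, ρ is a root of f
        rw [_root_.abs_of_nonneg (by linarith)] at habs
        have hfρ : f ρ = 0 := by simp only [hf]; linarith
        have hwnρ : w ^ n = ((ρ:ℂ)) ^ n := by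
          have : (c:ℂ) * w ^ n = (c:ℂ) * (ρ:ℂ) ^ n := by
            rw [hwn]; push_cast
            rw [show (ρ:ℂ)^2 - (ε:ℂ) = ((ρ^2 - ε : ℝ):ℂ) by push_cast; ring]
            rw [show (ρ^2 - ε : ℝ) = c * ρ ^ n by linarith]
            push_cast; ring
          exact mul_left_cancel₀ hcC this
        have hv : (w / ρ) ^ n = 1 := by
          rw [div_pow, hwnρ, div_self (pow_ne_zero n hρC)]
        obtain ⟨k', hk'n, hk'⟩ := hprim.eq_pow_of_pow_eq_one hv
        have hweq : w = (ρ:ℂ) * ζ ^ k' := by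
          have := congrArg (fun z => (ρ:ℂ) * z) hk'
          simp only [mul_div_cancel₀ _ hρC] at this
          rw [← this]
        obtain ⟨kk, hkk1, hkk2, hζkk⟩ :
            ∃ kk : ℕ, 1 ≤ kk ∧ kk ≤ n ∧ ζ ^ kk = ζ ^ k' := by
          rcases Nat.eq_zero_or_pos k' with rfl | hpos
          · exact ⟨n, hn0, le_refl n, by rw [hζn, pow_zero]⟩
          · exact ⟨k', hpos, hk'n.le, rfl⟩
        have hkmem : kk ∈ Finset.Icc 1 n := Finset.mem_Icc.mpr ⟨hkk1, hkk2⟩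
        rcases le_or_gt ρ R with hρR | hρR
        · have hρeq : ρ = ρ₂ := huniq₂ ρ ⟨hρ0.le, hρR⟩ hfρ
          exact ⟨⟨kk, hkmem⟩, Or.inr (Or.inl (by rw [hweq, hρeq, ← hζk, hζkk]))⟩
        · have hρeq : ρ = ρ₃ := huniq₃ ρ (Set.mem_Ici.mpr hρR.le) hfρ
          exact ⟨⟨kk, hkmem⟩, Or.inr (Or.inr (by rw [hweq, hρeq, ← hζk, hζkk]))⟩
      · -- w^n = -ρ^n, ρ = ρ₁
        rw [_root_.abs_of_neg (by linarith)] at habs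
        have hgρ : g ρ = 0 := by simp only [hg]; linarith
        have hρeq : ρ = ρ₁ := huniq₁ ρ hρ0.le hgρ
        have hwnρ : w ^ n = -((ρ:ℂ)) ^ n := by
          have : (c:ℂ) * w ^ n = (c:ℂ) * (-(ρ:ℂ) ^ n) := by
            rw [hwn]; push_cast
            rw [show (ρ:ℂ)^2 - (ε:ℂ) = ((ρ^2 - ε : ℝ):ℂ) by push_cast; ring]
            rw [show (ρ^2 - ε : ℝ) = c * (-(ρ ^ n)) by linarith]
            push_cast; ring
          exact mul_left_cancel₀ hcC this
        have hv : (w / ((ρ:ℂ) * Complex.exp ((Real.pi / n : ℝ) * I))) ^ n = 1 := by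
          rw [div_pow, hwnρ, mul_pow, hexpn]
          rw [div_eq_one_iff_eq (by
            apply mul_ne_zero (pow_ne_zero n hρC)
            norm_num)]
          ring
        obtain ⟨k', hk'n, hk'⟩ := hprim.eq_pow_of_pow_eq_one hv
        have hweq : w = (ρ:ℂ) * (Complex.exp ((Real.pi / n : ℝ) * I) * ζ ^ k') := by
          have hden : (ρ:ℂ) * Complex.exp ((Real.pi / n : ℝ) * I) ≠ 0 :=
            mul_ne_zero hρC (Complex.exp_ne_zero _)
          have := congrArg (fun z => ((ρ:ℂ) * Complex.exp ((Real.pi / n : ℝ) * I)) * z) hk'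
          simp only [mul_div_cancel₀ _ hden] at this
          rw [← this]; ring
        obtain ⟨kk, hkk1, hkk2, hζkk⟩ :
            ∃ kk : ℕ, 1 ≤ kk ∧ kk ≤ n ∧ ζ ^ kk = ζ ^ k' := by
          rcases Nat.eq_zero_or_pos k' with rfl | hpos
          · exact ⟨n, hn0, le_refl n, by rw [hζn, pow_zero]⟩
          · exact ⟨k', hpos, hk'n.le, rfl⟩
        have hkmem : kk ∈ Finset.Icc 1 n := Finset.mem_Icc.mpr ⟨hkk1, hkk2⟩
        exact ⟨⟨kk, hkmem⟩, Or.inl (by rw [hweq, hρeq, hodd, hζkk])⟩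
    · have habsmul : ∀ (r θ : ℝ), 0 < r →
          ‖(r:ℂ) * Complex.exp ((θ:ℝ) * I)‖ = r := by
        intro r θ hr
        rw [norm_mul, Complex.norm_real, Real.norm_eq_abs, Complex.norm_exp_ofReal_mul_I, mul_one, _root_.abs_of_pos hr]
      have heven : ∀ k : ℕ, Complex.exp (((2 * (k:ℕ)) * Real.pi / n : ℝ) * I) ^ n = 1 := by
        intro k
        rw [← hζk, ← pow_mul, mul_comm k n, pow_mul, hζn, one_pow]
      have hoddn : ∀ k : ℕ, Complex.exp (((2 * (k:ℕ) + 1) * Real.pi / n : ℝ) * I) ^ n = -1 := by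
        intro k
        rw [hodd, mul_pow, hexpn, ← pow_mul, mul_comm k n, pow_mul, hζn, one_pow, mul_one]
      rintro ⟨⟨k, hk⟩, h | h | h⟩ <;> subst h
      · have hr : c * ρ₁ ^ n + ρ₁ ^ 2 - ε = 0 := by simpa only [hg] using hρ₁
        have hr0 : ((c * ρ₁ ^ n + ρ₁ ^ 2 - ε : ℝ) : ℂ) = 0 := by rw [hr]; norm_num
        push_cast at hr0
        rw [mul_pow, hoddn, habsmul _ _ hρ₁pos]
        push_cast
        linear_combination -hr0
      · have hr : c * ρ₂ ^ n - ρ₂ ^ 2 + ε = 0 := by simpa only [hf] using hρ₂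
        have hr0 : ((c * ρ₂ ^ n - ρ₂ ^ 2 + ε : ℝ) : ℂ) = 0 := by rw [hr]; norm_num
        push_cast at hr0
        rw [mul_pow, heven, habsmul _ _ hρ₂pos]
        push_cast
        linear_combination hr0
      · have hr : c * ρ₃ ^ n - ρ₃ ^ 2 + ε = 0 := by simpa only [hf] using hρ₃
        have hr0 : ((c * ρ₃ ^ n - ρ₃ ^ 2 + ε : ℝ) : ℂ) = 0 := by rw [hr]; norm_num
        push_cast at hr0
        rw [mul_pow, heven, habsmul _ _ hρ₃pos]
        push_cast
        linear_combination hr0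
  -- cardinality
  have habsmul : ∀ (r θ : ℝ), 0 < r →
      ‖(r:ℂ) * Complex.exp ((θ:ℝ) * I)‖ = r := by
    intro r θ hr
    rw [norm_mul, Complex.norm_real, Real.norm_eq_abs, Complex.norm_exp_ofReal_mul_I, mul_one, _root_.abs_of_pos hr]
  set e₁ : ℕ → ℂ := fun k => (ρ₁:ℂ) * Complex.exp (((2 * (k:ℕ) + 1) * Real.pi / n : ℝ) * I)
    with he₁
  set e₂ : ℕ → ℂ := fun k => (ρ₂:ℂ) * Complex.exp (((2 * (k:ℕ)) * Real.pi / n : ℝ) * I)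
    with he₂
  set e₃ : ℕ → ℂ := fun k => (ρ₃:ℂ) * Complex.exp (((2 * (k:ℕ)) * Real.pi / n : ℝ) * I)
    with he₃
  set K : Set ℕ := Set.Icc 1 n with hK
  have hKfin : K.Finite := Set.finite_Icc 1 n
  have hKcard : K.ncard = n := by
    rw [hK, ← Finset.coe_Icc, Set.ncard_coe_finset, Nat.card_Icc]; omega
  have hinj₁ : Set.InjOn e₁ K := by
    intro k hk k' hk' h
    simp only [he₁, hodd] at h
    have h2 := mul_left_cancel₀ (Complex.ofReal_ne_zero.mpr hρ₁pos.ne') h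
    have h3 := mul_left_cancel₀ (Complex.exp_ne_zero _) h2
    exact hζinj k k' hk.1 hk.2 hk'.1 hk'.2 h3
  have hinjeven : ∀ r : ℝ, 0 < r →
      Set.InjOn (fun k : ℕ => (r:ℂ) * Complex.exp (((2 * (k:ℕ)) * Real.pi / n : ℝ) * I)) K := by
    intro r hr k hk k' hk' h
    simp only [← hζk] at h
    have h2 := mul_left_cancel₀ (Complex.ofReal_ne_zero.mpr hr.ne') h
    exact hζinj k k' hk.1 hk.2 hk'.1 hk'.2 h2
  have habse₁ : ∀ w ∈ e₁ '' K, ‖w‖ = ρ₁ := by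
    rintro w ⟨k, hk, rfl⟩; exact habsmul _ _ hρ₁pos
  have habse₂ : ∀ w ∈ e₂ '' K, ‖w‖ = ρ₂ := by
    rintro w ⟨k, hk, rfl⟩; exact habsmul _ _ hρ₂pos
  have habse₃ : ∀ w ∈ e₃ '' K, ‖w‖ = ρ₃ := by
    rintro w ⟨k, hk, rfl⟩; exact habsmul _ _ hρ₃pos
  have hρ12 : ρ₁ ≠ ρ₂ := by have := hρ₁mem.2; have := hρ₂mem.1; linarith
  have hρ13 : ρ₁ ≠ ρ₃ := by
    have := hρ₁mem.2; have := hρ₃mem.1; have := hρ₂mem.1; have := hρ₂mem.2; linarith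
  have hρ23 : ρ₂ ≠ ρ₃ := by have := hρ₂mem.2; have := hρ₃mem.1; linarith
  have hdisj12 : Disjoint (e₁ '' K) (e₂ '' K) := by
    rw [Set.disjoint_left]
    intro w h1 h2
    exact hρ12 ((habse₁ w h1).symm.trans (habse₂ w h2))
  have hdisj13 : Disjoint (e₁ '' K) (e₃ '' K) := by
    rw [Set.disjoint_left]
    intro w h1 h2
    exact hρ13 ((habse₁ w h1).symm.trans (habse₃ w h2))
  have hdisj23 : Disjoint (e₂ '' K) (e₃ '' K) := by
    rw [Set.disjoint_left]
    intro w h1 h2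
    exact hρ23 ((habse₂ w h1).symm.trans (habse₃ w h2))
  have hSet : {w : ℂ | (c : ℂ) * w ^ n - (‖w‖ : ℂ) ^ 2 + (ε : ℂ) = 0} =
      e₁ '' K ∪ e₂ '' K ∪ e₃ '' K := by
    ext w
    rw [Set.mem_setOf_eq, hiff w]
    constructor
    · rintro ⟨⟨k, hk⟩, h | h | h⟩
      · exact Or.inl (Or.inl ⟨k, Set.mem_Icc.mpr (Finset.mem_Icc.mp hk), h.symm⟩)
      · exact Or.inl (Or.inr ⟨k, Set.mem_Icc.mpr (Finset.mem_Icc.mp hk), h.symm⟩)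
      · exact Or.inr ⟨k, Set.mem_Icc.mpr (Finset.mem_Icc.mp hk), h.symm⟩
    · rintro ((⟨k, hk, h⟩ | ⟨k, hk, h⟩) | ⟨k, hk, h⟩)
      · exact ⟨⟨k, Finset.mem_Icc.mpr (Set.mem_Icc.mp hk)⟩, Or.inl h.symm⟩
      · exact ⟨⟨k, Finset.mem_Icc.mpr (Set.mem_Icc.mp hk)⟩, Or.inr (Or.inl h.symm)⟩
      · exact ⟨⟨k, Finset.mem_Icc.mpr (Set.mem_Icc.mp hk)⟩, Or.inr (Or.inr h.symm)⟩
  have hncard : Set.ncard {w : ℂ | (c : ℂ) * w ^ n - (‖w‖ : ℂ) ^ 2 + (ε : ℂ) = 0}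
      = 3 * n := by
    rw [hSet]
    rw [Set.ncard_union_eq (by
        rw [Set.disjoint_union_left]; exact ⟨hdisj13, hdisj23⟩)
      ((hKfin.image e₁).union (hKfin.image e₂)) (hKfin.image e₃)]
    rw [Set.ncard_union_eq hdisj12 (hKfin.image e₁) (hKfin.image e₂)]
    rw [Set.ncard_image_of_injOn hinj₁, Set.ncard_image_of_injOn (hinjeven ρ₂ hρ₂pos),
      Set.ncard_image_of_injOn (hinjeven ρ₃ hρ₃pos), hKcard]
    ring
  exact ⟨ρ₁, ρ₂, ρ₃, hρ₁mem.1, hρ₁mem.2, hρ₂mem.1, hρ₂mem.2, hρ₃mem.1, hiff, hncard⟩
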